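/- With the above notation, |Γ(θ) − T ∑_{k∈ℤ} λ_k |c_k|²| ≤ 2θ‖c‖₁²/π + (2N+1) θ² ‖c‖₁² / (π² T). -/

import Mathlib

noncomputable def phihat (x : ℝ) : ℝ :=
  if x = 0 then 1 else Real.sin (Real.pi * x) / (Real.pi * x)

lemma phihat_zero : phihat 0 = 1 := by simp [phihat]

lemma abs_phihat_le_one (x : ℝ) : |phihat x| ≤ 1 := by
  unfold phihat
  split
  · simp
  · rename_i hx
    rw [abs_div]
    rcases eq_or_ne (|Real.pi * x|) 0 with h | h
    · simp [h]
    · rw [div_le_one (lt_of_le_of_ne (abs_nonneg _) (Ne.symm h))]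
      exact Real.abs_sin_le_abs

lemma abs_phihat_le (x : ℝ) (hx : x ≠ 0) : |phihat x| ≤ 1 / (Real.pi * |x|) := by
  have hx' : 0 < |x| := abs_pos.mpr hx
  have hpi := Real.pi_pos
  unfold phihat
  rw [if_neg hx, abs_div, abs_mul, abs_of_pos hpi]
  exact div_le_div_of_nonneg_right (Real.abs_sin_le_one _) (by positivity)

theorem stmt_3 (T θ : ℝ) (hT : 0 < T) (hθ : 0 < θ)
    (c : ℤ → ℂ) (hc : Summable fun l : ℤ => ‖c l‖)
    (N : ℕ) (hN : 0 < N) (lam : ℤ → ℝ)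
    (hlam0 : lam 0 = 0) (hsym : ∀ k : ℤ, lam (-k) = lam k)
    (hrange : ∀ k : ℤ, 0 ≤ lam k ∧ lam k ≤ 1)
    (hsupp : ∀ k : ℤ, (N : ℤ) < |k| → lam k = 0) :
    |T * (∑' k : ℤ, lam k *
          ‖∑' l : ℤ, c l * (phihat ((T / θ) * ((l : ℝ) - (k : ℝ) * θ / θ)) : ℂ)‖ ^ 2)
        - T * ∑' k : ℤ, lam k * ‖c k‖ ^ 2|
      ≤ 2 * θ * (∑' l : ℤ, ‖c l‖) ^ 2 / Real.pi
        + (2 * N + 1) * θ ^ 2 * (∑' l : ℤ, ‖c l‖) ^ 2 / (Real.pi ^ 2 * T) := by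
  have hpi := Real.pi_pos
  set S : ℝ := ∑' l : ℤ, ‖c l‖ with hS
  have hS0 : 0 ≤ S := tsum_nonneg fun _ => norm_nonneg _
  set ε : ℝ := θ * S / (Real.pi * T) with hε
  have hε0 : 0 ≤ ε := by positivity
  -- simplify the argument
  have harg : ∀ k l : ℤ, (T / θ) * ((l : ℝ) - (k : ℝ) * θ / θ)
      = (T / θ) * ((l : ℝ) - (k : ℝ)) := by
    intro k l
    rw [mul_div_assoc, div_self hθ.ne', mul_one]
  set f : ℤ → ℂ := fun k =>
    ∑' l : ℤ, c l * (phihat ((T / θ) * ((l : ℝ) - (k : ℝ) * θ / θ)) : ℂ) with hf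
  -- summability of the inner series
  have hsum : ∀ k : ℤ, Summable fun l : ℤ =>
      c l * (phihat ((T / θ) * ((l : ℝ) - (k : ℝ) * θ / θ)) : ℂ) := by
    intro k
    apply Summable.of_norm_bounded hc
    intro l
    rw [norm_mul, Complex.norm_real, Real.norm_eq_abs]
    exact mul_le_of_le_one_right (norm_nonneg _) (abs_phihat_le_one _)
  -- key estimate : ‖f k - c k‖ ≤ ε
  have hkey : ∀ k : ℤ, ‖f k - c k‖ ≤ ε := by
    intro k
    have hterm : c k * (phihat ((T / θ) * ((k : ℝ) - (k : ℝ) * θ / θ)) : ℂ) = c k := by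
      rw [harg k k, sub_self, mul_zero, phihat_zero]
      simp
    show ‖(∑' l : ℤ, c l * (phihat ((T / θ) * ((l : ℝ) - (k : ℝ) * θ / θ)) : ℂ)) - c k‖ ≤ ε
    rw [Summable.tsum_eq_add_tsum_ite (hsum k) k, hterm, add_sub_cancel_left]
    have hb : ∀ l : ℤ, ‖(if l = k then 0 else
        c l * (phihat ((T / θ) * ((l : ℝ) - (k : ℝ) * θ / θ)) : ℂ))‖
        ≤ (θ / (Real.pi * T)) * ‖c l‖ := by
      intro l
      by_cases hl : l = k
      · simp [hl]; positivity
      · rw [if_neg hl, norm_mul, Complex.norm_real, Real.norm_eq_abs, harg]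
        have hlk : ((l : ℝ) - (k : ℝ)) ≠ 0 := by
          intro h
          exact hl (by exact_mod_cast sub_eq_zero.mp h)
        have hx : (T / θ) * ((l : ℝ) - (k : ℝ)) ≠ 0 := by
          apply mul_ne_zero (by positivity) hlk
        have h1 : (1 : ℝ) ≤ |(l : ℝ) - (k : ℝ)| := by
          have : (1 : ℤ) ≤ |l - k| := Int.one_le_abs (sub_ne_zero.mpr hl)
          calc (1:ℝ) ≤ ((|l - k| : ℤ) : ℝ) := by exact_mod_cast this
            _ = |(l : ℝ) - (k : ℝ)| := by push_cast [Int.cast_abs]; ring_nf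
        have := abs_phihat_le _ hx
        have habs : |(T / θ) * ((l : ℝ) - (k : ℝ))| ≥ T / θ := by
          rw [abs_mul, abs_of_pos (by positivity : (0:ℝ) < T / θ)]
          nlinarith [div_pos hT hθ]
        have h2 : 1 / (Real.pi * |(T / θ) * ((l : ℝ) - (k : ℝ))|) ≤ θ / (Real.pi * T) := by
          rw [div_le_div_iff₀ (by positivity) (by positivity)]
          have : Real.pi * (T / θ) ≤ Real.pi * |(T / θ) * ((l : ℝ) - (k : ℝ))| :=
            mul_le_mul_of_nonneg_left habs hpi.le
          calc 1 * (Real.pi * T) = θ * (Real.pi * (T / θ)) := by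
                field_simp
            _ ≤ θ * (Real.pi * |(T / θ) * ((l : ℝ) - (k : ℝ))|) :=
                mul_le_mul_of_nonneg_left this hθ.le
        calc ‖c l‖ * |phihat ((T / θ) * ((l : ℝ) - (k : ℝ)))|
            ≤ ‖c l‖ * (θ / (Real.pi * T)) :=
              mul_le_mul_of_nonneg_left (le_trans this h2) (norm_nonneg _)
          _ = (θ / (Real.pi * T)) * ‖c l‖ := by ring
    have hsb : Summable fun l : ℤ => (θ / (Real.pi * T)) * ‖c l‖ := hc.mul_left _
    have hnorm : Summable fun l : ℤ => ‖(if l = k then 0 else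
        c l * (phihat ((T / θ) * ((l : ℝ) - (k : ℝ) * θ / θ)) : ℂ))‖ :=
      Summable.of_nonneg_of_le (fun _ => norm_nonneg _) hb hsb
    calc ‖∑' l : ℤ, (if l = k then 0 else
          c l * (phihat ((T / θ) * ((l : ℝ) - (k : ℝ) * θ / θ)) : ℂ))‖
        ≤ ∑' l : ℤ, ‖(if l = k then 0 else
          c l * (phihat ((T / θ) * ((l : ℝ) - (k : ℝ) * θ / θ)) : ℂ))‖ :=
          norm_tsum_le_tsum_norm hnorm
      _ ≤ ∑' l : ℤ, (θ / (Real.pi * T)) * ‖c l‖ := Summable.tsum_le_tsum hb hnorm hsb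
      _ = (θ / (Real.pi * T)) * S := by rw [tsum_mul_left]
      _ = ε := by rw [hε]; ring
  -- pointwise bound on the squared norms
  have hcS : ∀ k : ℤ, ‖c k‖ ≤ S := fun k => Summable.le_tsum hc k fun _ _ => norm_nonneg _
  have hsq : ∀ k : ℤ, |‖f k‖ ^ 2 - ‖c k‖ ^ 2| ≤ 2 * ‖c k‖ * ε + ε ^ 2 := by
    intro k
    have h1 : |‖f k‖ - ‖c k‖| ≤ ε := le_trans (abs_norm_sub_norm_le _ _) (hkey k)
    have h2 : ‖f k‖ + ‖c k‖ ≤ 2 * ‖c k‖ + ε := by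
      have : ‖f k‖ ≤ ‖c k‖ + ε := by
        have := (abs_le.mp h1).2; linarith
      linarith
    have : |‖f k‖ ^ 2 - ‖c k‖ ^ 2| = |‖f k‖ - ‖c k‖| * (‖f k‖ + ‖c k‖) := by
      rw [← abs_of_nonneg (by positivity : (0:ℝ) ≤ ‖f k‖ + ‖c k‖), ← abs_mul]
      ring_nf
    rw [this]
    calc |‖f k‖ - ‖c k‖| * (‖f k‖ + ‖c k‖) ≤ ε * (2 * ‖c k‖ + ε) :=
          mul_le_mul h1 h2 (by positivity) hε0
      _ = 2 * ‖c k‖ * ε + ε ^ 2 := by ring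
  -- the tsums over k are finite sums over Icc (-N) N
  set s : Finset ℤ := Finset.Icc (-(N : ℤ)) N with hs
  have hmem : ∀ k : ℤ, k ∉ s → lam k = 0 := by
    intro k hk
    apply hsupp
    simp only [hs, Finset.mem_Icc, not_and_or, not_le] at hk
    rcases hk with h | h
    · rw [abs_of_neg (by omega : k < 0)]; omega
    · rw [abs_of_pos (by omega : 0 < k)]; omega
  have ht1 : (∑' k : ℤ, lam k * ‖f k‖ ^ 2) = ∑ k ∈ s, lam k * ‖f k‖ ^ 2 := by
    apply tsum_eq_sum
    intro k hk; rw [hmem k hk, zero_mul]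
  have ht2 : (∑' k : ℤ, lam k * ‖c k‖ ^ 2) = ∑ k ∈ s, lam k * ‖c k‖ ^ 2 := by
    apply tsum_eq_sum
    intro k hk; rw [hmem k hk, zero_mul]
  rw [show (∑' k : ℤ, lam k *
          ‖∑' l : ℤ, c l * (phihat ((T / θ) * ((l : ℝ) - (k : ℝ) * θ / θ)) : ℂ)‖ ^ 2)
      = ∑' k : ℤ, lam k * ‖f k‖ ^ 2 from rfl, ht1, ht2]
  have hcard : (s.card : ℝ) = 2 * N + 1 := by
    have h : s.card = 2 * N + 1 := by
      rw [hs, Int.card_Icc]; omega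
    rw [h]; push_cast; ring
  have hsum_c : ∑ k ∈ s, ‖c k‖ ≤ S := Summable.sum_le_tsum s (fun _ _ => norm_nonneg _) hc
  have hmain : |∑ k ∈ s, lam k * ‖f k‖ ^ 2 - ∑ k ∈ s, lam k * ‖c k‖ ^ 2|
      ≤ 2 * S * ε + (2 * N + 1) * ε ^ 2 := by
    rw [← Finset.sum_sub_distrib]
    calc |∑ k ∈ s, (lam k * ‖f k‖ ^ 2 - lam k * ‖c k‖ ^ 2)|
        ≤ ∑ k ∈ s, |lam k * ‖f k‖ ^ 2 - lam k * ‖c k‖ ^ 2| :=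
          Finset.abs_sum_le_sum_abs _ _
      _ ≤ ∑ k ∈ s, (2 * ‖c k‖ * ε + ε ^ 2) := by
          apply Finset.sum_le_sum
          intro k _
          rw [← mul_sub, abs_mul, abs_of_nonneg (hrange k).1]
          calc lam k * |‖f k‖ ^ 2 - ‖c k‖ ^ 2| ≤ 1 * |‖f k‖ ^ 2 - ‖c k‖ ^ 2| :=
                mul_le_mul_of_nonneg_right (hrange k).2 (abs_nonneg _)
            _ = |‖f k‖ ^ 2 - ‖c k‖ ^ 2| := one_mul _
            _ ≤ 2 * ‖c k‖ * ε + ε ^ 2 := hsq k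
      _ = 2 * (∑ k ∈ s, ‖c k‖) * ε + s.card * ε ^ 2 := by
          rw [Finset.sum_add_distrib, Finset.sum_const, nsmul_eq_mul,
            ← Finset.sum_mul, ← Finset.mul_sum]
      _ ≤ 2 * S * ε + (2 * N + 1) * ε ^ 2 := by
          rw [hcard]
          have : 2 * (∑ k ∈ s, ‖c k‖) * ε ≤ 2 * S * ε := by
            apply mul_le_mul_of_nonneg_right _ hε0
            linarith
          linarith
  calc |T * (∑ k ∈ s, lam k * ‖f k‖ ^ 2) - T * ∑ k ∈ s, lam k * ‖c k‖ ^ 2|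
      = T * |∑ k ∈ s, lam k * ‖f k‖ ^ 2 - ∑ k ∈ s, lam k * ‖c k‖ ^ 2| := by
        rw [← mul_sub, abs_mul, abs_of_pos hT]
    _ ≤ T * (2 * S * ε + (2 * N + 1) * ε ^ 2) :=
        mul_le_mul_of_nonneg_left hmain hT.le
    _ = 2 * θ * S ^ 2 / Real.pi + (2 * N + 1) * θ ^ 2 * S ^ 2 / (Real.pi ^ 2 * T) := by
        rw [hε]; field_simp
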